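/- arXiv:2301.05284 — 4 statements merged into one kernel-verified Lean document; each statement's English description precedes it below -/
import Mathlib

section
/- Let f : ℝ → ℝ be twice continuously differentiable with f'' bounded and continuous. Then for each fixed x, (G(t)f)(x) = f(x) + t·f''(x) + o(t) as t → 0⁺, where (G(t)f)(x) = (1/2)f(x) + (1/4)f(x + 2√t) + (1/4)f(x - 2√t). In particular, lim_{t→0⁺} ((G(t)f)(x) - f(x))/t = f''(x). -/
open Real Asymptotics Filter

private lemma taylor2 (f : ℝ → ℝ) (hf : ContDiff ℝ 2 f) (x : ℝ) :
    (fun h : ℝ => f (x + h) - f x - h * deriv f x - h ^ 2 / 2 * deriv (deriv f) x)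
      =o[nhds 0] (fun h : ℝ => h ^ 2) := by
  set c := deriv (deriv f) x with hc
  have hf1 : ContDiff ℝ 1 (deriv f) :=
    ((contDiff_succ_iff_deriv (n := 1)).mp (by exact_mod_cast hf)).2.2
  have hfd : Differentiable ℝ f := hf.differentiable (by norm_num)
  have hfd1 : Differentiable ℝ (deriv f) := hf1.differentiable (by norm_num)
  -- ψ h = deriv f (x + h) - deriv f x - h * c  is o(h)
  have hψ : (fun h : ℝ => deriv f (x + h) - deriv f x - h * c) =o[nhds 0] (fun h : ℝ => h) := by
    have H : HasDerivAt (fun h : ℝ => deriv f (x + h)) c 0 := by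
      have h1 : HasDerivAt (deriv f) c ((fun h : ℝ => x + h) 0) := by
        simp only [add_zero]
        exact (hfd1 x).hasDerivAt
      have h2 : HasDerivAt (fun h : ℝ => x + h) 1 0 := by
        simpa using (hasDerivAt_id (0:ℝ)).const_add x
      simpa [Function.comp_def] using h1.comp (0:ℝ) h2
    have := (hasDerivAt_iff_isLittleO (f := fun h : ℝ => deriv f (x + h)) (x := (0:ℝ))
        (f' := c)).mp H
    simpa [smul_eq_mul, mul_comm] using this
  rw [isLittleO_iff]
  intro ε hε
  rw [isLittleO_iff] at hψ
  rcases Metric.eventually_nhds_iff.mp (hψ hε) with ⟨δ, hδ, hball⟩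
  have hmem : Metric.ball (0:ℝ) δ ∈ nhds (0:ℝ) := Metric.ball_mem_nhds _ hδ
  filter_upwards [hmem] with h hh
  -- mean value on segment from 0 to h
  set φ : ℝ → ℝ := fun t => f (x + t) - f x - t * deriv f x - t ^ 2 / 2 * c with hφ
  have hφderiv : ∀ t, HasDerivAt φ (deriv f (x + t) - deriv f x - t * c) t := by
    intro t
    have h1 : HasDerivAt (fun t : ℝ => f (x + t)) (deriv f (x + t)) t := by
      have ha : HasDerivAt f (deriv f (x + t)) ((fun s : ℝ => x + s) t) := by
        simpa using (hfd (x + t)).hasDerivAt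
      have hb : HasDerivAt (fun s : ℝ => x + s) 1 t := by
        simpa using (hasDerivAt_id t).const_add x
      simpa [Function.comp_def] using ha.comp t hb
    have h2 : HasDerivAt (fun t : ℝ => t * deriv f x) (deriv f x) t := by
      simpa using (hasDerivAt_id t).mul_const (deriv f x)
    have h3 : HasDerivAt (fun t : ℝ => t ^ 2 / 2 * c) (t * c) t := by
      have : HasDerivAt (fun t : ℝ => t ^ 2) (2 * t) t := by
        simpa using (hasDerivAt_pow 2 t)
      have := (this.div_const 2).mul_const c
      convert this using 1
      exacts [rfl, rfl, by ring]
    exact (((h1.sub_const (f x)).sub h2).sub h3 : _)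
  have key : ‖φ h - φ 0‖ ≤ ε * |h| * ‖h - 0‖ := by
    apply Convex.norm_image_sub_le_of_norm_hasDerivWithin_le
      (f' := fun t => deriv f (x + t) - deriv f x - t * c)
      (fun t ht => (hφderiv t).hasDerivWithinAt) ?_ (convex_segment 0 h)
      (left_mem_segment ℝ 0 h) (right_mem_segment ℝ 0 h)
    intro t ht
    rw [segment_eq_uIcc, Set.mem_uIcc] at ht
    have htabs : |t| ≤ |h| := by
      rcases ht with ⟨h1, h2⟩ | ⟨h1, h2⟩
      · rw [abs_of_nonneg h1]; exact le_trans h2 (le_abs_self h)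
      · rw [abs_of_nonpos h2]; exact le_trans (neg_le_neg h1) (neg_le_abs h)
    have htball : t ∈ Metric.ball (0:ℝ) δ := by
      simp only [Metric.mem_ball, Real.dist_eq, sub_zero] at hh ⊢
      exact lt_of_le_of_lt htabs hh
    have := hball (by simpa [Real.dist_eq] using htball)
    calc ‖deriv f (x + t) - deriv f x - t * c‖ ≤ ε * ‖t‖ := this
      _ ≤ ε * |h| := by
          rw [Real.norm_eq_abs]
          exact mul_le_mul_of_nonneg_left htabs hε.le
  have hφ0 : φ 0 = 0 := by simp [hφ]
  simp only [hφ0, sub_zero, Real.norm_eq_abs] at key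
  calc ‖φ h‖ ≤ ε * |h| * |h| := by simpa [Real.norm_eq_abs] using key
    _ = ε * ‖h ^ 2‖ := by rw [Real.norm_eq_abs, abs_pow]; ring

theorem stmt_2 (f : ℝ → ℝ) (hf : ContDiff ℝ 2 f) (M : ℝ)
    (hM : ∀ x, |deriv (deriv f) x| ≤ M) (x : ℝ) :
    (fun t : ℝ => ((1/2) * f x + (1/4) * f (x + 2 * Real.sqrt t)
        + (1/4) * f (x - 2 * Real.sqrt t)) - f x - t * deriv (deriv f) x)
      =o[nhdsWithin 0 (Set.Ioi 0)] (fun t : ℝ => t) ∧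
    Tendsto (fun t : ℝ => (((1/2) * f x + (1/4) * f (x + 2 * Real.sqrt t)
        + (1/4) * f (x - 2 * Real.sqrt t)) - f x) / t)
      (nhdsWithin 0 (Set.Ioi 0)) (nhds (deriv (deriv f) x)) := by
  set c := deriv (deriv f) x with hc
  have hT := taylor2 f hf x
  have hg : Tendsto (fun t : ℝ => 2 * Real.sqrt t) (nhdsWithin 0 (Set.Ioi 0)) (nhds 0) := by
    have : Tendsto (fun t : ℝ => 2 * Real.sqrt t) (nhds 0) (nhds (2 * Real.sqrt 0)) :=
      (continuous_const.mul Real.continuous_sqrt).tendsto 0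
    simpa using this.mono_left nhdsWithin_le_nhds
  have hgn : Tendsto (fun t : ℝ => -(2 * Real.sqrt t)) (nhdsWithin 0 (Set.Ioi 0)) (nhds 0) := by
    simpa using hg.neg
  have h1 : (fun t : ℝ => f (x + 2 * Real.sqrt t) - f x - (2 * Real.sqrt t) * deriv f x
      - (2 * Real.sqrt t) ^ 2 / 2 * c) =o[nhdsWithin 0 (Set.Ioi 0)]
      (fun t : ℝ => (2 * Real.sqrt t) ^ 2) := hT.comp_tendsto hg
  have h2 : (fun t : ℝ => f (x + -(2 * Real.sqrt t)) - f x - (-(2 * Real.sqrt t)) * deriv f x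
      - (-(2 * Real.sqrt t)) ^ 2 / 2 * c) =o[nhdsWithin 0 (Set.Ioi 0)]
      (fun t : ℝ => (-(2 * Real.sqrt t)) ^ 2) := hT.comp_tendsto hgn
  have hsq : ∀ᶠ t in nhdsWithin 0 (Set.Ioi 0), (2 * Real.sqrt t) ^ 2 = 4 * t := by
    filter_upwards [self_mem_nhdsWithin] with t ht
    have : (0:ℝ) ≤ t := le_of_lt ht
    rw [mul_pow, Real.sq_sqrt this]; ring
  have h1' : (fun t : ℝ => f (x + 2 * Real.sqrt t) - f x - (2 * Real.sqrt t) * deriv f x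
      - 2 * t * c) =o[nhdsWithin 0 (Set.Ioi 0)] (fun t : ℝ => t) := by
    have hO : (fun t : ℝ => (2 * Real.sqrt t) ^ 2) =O[nhdsWithin 0 (Set.Ioi 0)]
        (fun t : ℝ => t) := ?_
    · refine (h1.trans_isBigO hO).congr' ?_ EventuallyEq.rfl
      filter_upwards [hsq] with t ht
      rw [ht]; ring_nf
    · apply IsBigO.of_bound 4
      filter_upwards [hsq] with t ht
      rw [ht]
      simp [abs_mul]
  have h2' : (fun t : ℝ => f (x - 2 * Real.sqrt t) - f x + (2 * Real.sqrt t) * deriv f x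
      - 2 * t * c) =o[nhdsWithin 0 (Set.Ioi 0)] (fun t : ℝ => t) := by
    have hsq' : ∀ᶠ t in nhdsWithin 0 (Set.Ioi 0), (-(2 * Real.sqrt t)) ^ 2 = 4 * t := by
      filter_upwards [hsq] with t ht
      rw [neg_pow, ht]; ring
    have hO : (fun t : ℝ => (-(2 * Real.sqrt t)) ^ 2) =O[nhdsWithin 0 (Set.Ioi 0)]
        (fun t : ℝ => t) := ?_
    · refine (h2.trans_isBigO hO).congr' ?_ EventuallyEq.rfl
      filter_upwards [hsq'] with t ht
      rw [ht]
      ring_nf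
    · apply IsBigO.of_bound 4
      filter_upwards [hsq'] with t ht
      rw [ht]
      simp [abs_mul]
  have hmain : (fun t : ℝ => ((1/2) * f x + (1/4) * f (x + 2 * Real.sqrt t)
        + (1/4) * f (x - 2 * Real.sqrt t)) - f x - t * c)
      =o[nhdsWithin 0 (Set.Ioi 0)] (fun t : ℝ => t) := by
    have := (h1'.add h2').const_mul_left (1/4 : ℝ)
    refine this.congr' ?_ EventuallyEq.rfl
    filter_upwards with t
    have : x - 2 * Real.sqrt t = x + -(2 * Real.sqrt t) := by ring
    rw [this] at *
    ring_nf
  refine ⟨hmain, ?_⟩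
  have hdiv : Tendsto (fun t : ℝ => (((1/2) * f x + (1/4) * f (x + 2 * Real.sqrt t)
        + (1/4) * f (x - 2 * Real.sqrt t)) - f x - t * c) / t)
      (nhdsWithin 0 (Set.Ioi 0)) (nhds 0) := hmain.tendsto_div_nhds_zero
  have := hdiv.add (tendsto_const_nhds (x := c) (f := nhdsWithin 0 (Set.Ioi 0)))
  rw [zero_add] at this
  refine this.congr' ?_
  filter_upwards [self_mem_nhdsWithin] with t ht
  have htne : t ≠ 0 := ne_of_gt ht
  field_simp
  ring
end

section
/- Let f : ℝ → ℝ be four times continuously differentiable with f⁽⁴⁾ bounded and continuous. Then for each fixed x, (S(t)f)(x) = f(x) + t·f''(x) + (t²/2)·f⁽⁴⁾(x) + o(t²) as t → 0⁺, where (S(t)f)(x) = (2/3)f(x) + (1/6)f(x + √(6t)) + (1/6)f(x - √(6t)). -/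
open Real Asymptotics Filter

private lemma idw_eq {f : ℝ → ℝ} (hf : ContDiff ℝ 4 f) {s : Set ℝ} (hs : UniqueDiffOn ℝ s)
    {y : ℝ} (hy : y ∈ s) {n : ℕ} (hn : n ≤ 4) :
    iteratedDerivWithin n f s y = iteratedDeriv n f y := by
  have H : HasFTaylorSeriesUpTo ((4 : ℕ∞) : WithTop ℕ∞) f (ftaylorSeries ℝ f) :=
    contDiff_iff_ftaylorSeries.mp (by exact_mod_cast hf)
  have := (H.hasFTaylorSeriesUpToOn s).eq_iteratedFDerivWithin_of_uniqueDiffOn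
    (m := n) (by exact_mod_cast hn) hs hy
  rw [iteratedDerivWithin_eq_iteratedFDerivWithin, iteratedDeriv_eq_iteratedFDeriv, ← this]
  rfl

private lemma lagrange4 {f : ℝ → ℝ} (hf : ContDiff ℝ 4 f) {a b : ℝ} (hab : a < b) :
    ∃ ξ ∈ Set.Ioo a b,
      f b - ∑ k ∈ Finset.range 4, (((k.factorial : ℝ))⁻¹ * (b - a) ^ k) * iteratedDeriv k f a
        = iteratedDeriv 4 f ξ * (b - a) ^ 4 / 24 := by
  have hs : UniqueDiffOn ℝ (Set.Icc a b) := uniqueDiffOn_Icc hab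
  have hf3 : ContDiffOn ℝ 3 f (Set.Icc a b) := (hf.of_le (by norm_num)).contDiffOn
  have hdiff : DifferentiableOn ℝ (iteratedDerivWithin 3 f (Set.Icc a b)) (Set.Ioo a b) := by
    have : Differentiable ℝ (iteratedDeriv 3 f) :=
      hf.differentiable_iteratedDeriv 3 (by norm_num)
    refine (this.differentiableOn).congr fun y hy => ?_
    exact idw_eq hf hs (Set.Ioo_subset_Icc_self hy) (by norm_num)
  obtain ⟨ξ, hξ, hval⟩ := taylor_mean_remainder_lagrange (n := 3) hab.ne
    (by rwa [Set.uIcc_of_lt hab]) (by rwa [Set.uIcc_of_lt hab, Set.uIoo_of_lt hab])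
  rw [Set.uIoo_of_lt hab] at hξ
  rw [Set.uIcc_of_lt hab] at hval
  refine ⟨ξ, hξ, ?_⟩
  rw [taylor_within_apply] at hval
  have h4 : iteratedDerivWithin 4 f (Set.Icc a b) ξ = iteratedDeriv 4 f ξ :=
    idw_eq hf hs (Set.Ioo_subset_Icc_self hξ) le_rfl
  rw [h4] at hval
  have hsum : ∀ k ∈ Finset.range 4,
      (((k.factorial : ℝ))⁻¹ * (b - a) ^ k) • iteratedDerivWithin k f (Set.Icc a b) a
        = (((k.factorial : ℝ))⁻¹ * (b - a) ^ k) * iteratedDeriv k f a := by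
    intro k hk
    rw [smul_eq_mul, idw_eq hf hs (Set.left_mem_Icc.2 hab.le)
      (by have := Finset.mem_range.mp hk; omega)]
  rw [Finset.sum_congr rfl hsum] at hval
  convert hval using 2
  norm_num [Nat.factorial]

theorem stmt_3 (f : ℝ → ℝ) (hf : ContDiff ℝ 4 f) (M : ℝ)
    (hM : ∀ x, |iteratedDeriv 4 f x| ≤ M) (x : ℝ) :
    (fun t : ℝ => ((2/3) * f x + (1/6) * f (x + Real.sqrt (6 * t))
        + (1/6) * f (x - Real.sqrt (6 * t)))
        - f x - t * iteratedDeriv 2 f x - (t ^ 2 / 2) * iteratedDeriv 4 f x)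
      =o[nhdsWithin 0 (Set.Ioi 0)] (fun t : ℝ => t ^ 2) := by
  rw [Asymptotics.isLittleO_iff]
  intro ε hε
  -- continuity of the fourth derivative
  have hc : ContinuousAt (iteratedDeriv 4 f) x :=
    (hf.continuous_iteratedDeriv 4 le_rfl).continuousAt
  rw [Metric.continuousAt_iff] at hc
  obtain ⟨δ, hδ, hδ'⟩ := hc ε hε
  -- the reflected function
  set g : ℝ → ℝ := fun u => f (2 * x - u) with hg_def
  have hg : ContDiff ℝ 4 g := hf.comp (contDiff_const.sub contDiff_id)
  have hgk : ∀ (k : ℕ) (y : ℝ), iteratedDeriv k g y = (-1 : ℝ) ^ k * iteratedDeriv k f (2 * x - y) := by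
    intro k y
    have hgeq : g = fun u => (fun z => f (2 * x + z)) (-u) := by
      funext u; simp [hg_def, sub_eq_add_neg]
    rw [hgeq, iteratedDeriv_comp_neg k (fun z => f (2 * x + z)) y,
      iteratedDeriv_comp_const_add k f (2 * x), smul_eq_mul]
    simp [sub_eq_add_neg]
  filter_upwards [Ioo_mem_nhdsGT_of_mem (Set.mem_Ico.mpr ⟨le_refl 0, by positivity⟩ :
      (0:ℝ) ∈ Set.Ico 0 (δ ^ 2 / 6))] with t ht
  obtain ⟨ht0, htδ⟩ := ht
  set h : ℝ := Real.sqrt (6 * t) with hh_def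
  have h2 : h ^ 2 = 6 * t := Real.sq_sqrt (by linarith)
  have hpos : 0 < h := Real.sqrt_pos.mpr (by linarith)
  have hlt : h < δ := by nlinarith
  -- Lagrange for f on [x, x+h]
  obtain ⟨ξ₁, hξ₁, heq1⟩ := lagrange4 hf (show x < x + h by linarith)
  -- Lagrange for g on [x, x+h]
  obtain ⟨ξ₂, hξ₂, heq2⟩ := lagrange4 hg (show x < x + h by linarith)
  set η : ℝ := 2 * x - ξ₂ with hη_def
  have hD4η : iteratedDeriv 4 g ξ₂ = iteratedDeriv 4 f η := by rw [hgk]; norm_num [hη_def]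
  have hgval : g (x + h) = f (x - h) := by rw [hg_def]; ring_nf
  -- small distances
  have hd1 : |iteratedDeriv 4 f ξ₁ - iteratedDeriv 4 f x| < ε := by
    have := hδ' (show dist ξ₁ x < δ by
      rw [Real.dist_eq]; rw [Set.mem_Ioo] at hξ₁
      rw [abs_lt]; constructor <;> nlinarith [hξ₁.1, hξ₁.2])
    rwa [Real.dist_eq] at this
  have hd2 : |iteratedDeriv 4 f η - iteratedDeriv 4 f x| < ε := by
    have := hδ' (show dist η x < δ by
      rw [Real.dist_eq]; rw [Set.mem_Ioo] at hξ₂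
      rw [abs_lt]; constructor <;> nlinarith [hξ₂.1, hξ₂.2])
    rwa [Real.dist_eq] at this
  -- expand the finite sums
  simp only [Finset.sum_range_succ, Finset.sum_range_zero, Nat.factorial] at heq1 heq2
  rw [hgval] at heq2
  simp only [hgk, hD4η] at heq2
  norm_num at heq1 heq2
  rw [show 2 * x - x = x by ring] at heq2
  rw [← hη_def] at heq2
  -- key algebraic identity
  have hexpr : ((2/3) * f x + (1/6) * f (x + h) + (1/6) * f (x - h))
      - f x - t * iteratedDeriv 2 f x - (t ^ 2 / 2) * iteratedDeriv 4 f x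
      = (h ^ 4 / 144) * ((iteratedDeriv 4 f ξ₁ - iteratedDeriv 4 f x)
          + (iteratedDeriv 4 f η - iteratedDeriv 4 f x)) := by
    have ht' : t = h ^ 2 / 6 := by linarith
    rw [ht']
    linear_combination (1/6) * heq1 + (1/6) * heq2
  rw [Real.norm_eq_abs, Real.norm_eq_abs, hexpr, abs_mul,
    abs_of_nonneg (show (0:ℝ) ≤ h ^ 4 / 144 by positivity),
    abs_of_nonneg (show (0:ℝ) ≤ t ^ 2 by positivity)]
  have habs : |(iteratedDeriv 4 f ξ₁ - iteratedDeriv 4 f x)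
      + (iteratedDeriv 4 f η - iteratedDeriv 4 f x)| ≤ 2 * ε := by
    calc _ ≤ _ := abs_add_le _ _
    _ ≤ 2 * ε := by linarith
  have h4 : h ^ 4 = 36 * t ^ 2 := by
    rw [show h ^ 4 = (h ^ 2) ^ 2 by ring, h2]; ring
  rw [h4]
  nlinarith [mul_le_mul_of_nonneg_left habs (sq_nonneg t), hε, sq_nonneg t]
end

section
/- Let f : ℝ → ℝ be twice continuously differentiable with bounded continuous f''. The operator C(t) defined by (C(t)f)(x) = (2/3)f(x) + (1/6)f(x + √(6t)) + (1/6)f(x - √(6t)) satisfies lim_{t→0⁺} ((C(t)f)(x) - f(x))/t = f''(x) for every x. -/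
open Real Filter

private lemma symm_quot (f : ℝ → ℝ) (hf : ContDiff ℝ 2 f) (x : ℝ) :
    Tendsto (fun h : ℝ => (f (x + h) + f (x - h) - 2 * f x) / h ^ 2)
      (nhdsWithin 0 (Set.Ioi 0)) (nhds (deriv (deriv f) x)) := by
  have hf1 : Differentiable ℝ f := hf.differentiable (by norm_num)
  have hf2 : Differentiable ℝ (deriv f) :=
    (hf.iterate_deriv' 1 1).differentiable (by norm_num)
  -- symmetric derivative of f' at x tends to f''(x)
  have hdiv : Tendsto (fun h : ℝ => (deriv f (x + h) - deriv f (x - h)) / (2 * h))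
      (nhdsWithin 0 (Set.Ioi 0)) (nhds (deriv (deriv f) x)) := by
    have hd : HasDerivAt (deriv f) (deriv (deriv f) x) x := (hf2 x).hasDerivAt
    have hs := hasDerivAt_iff_tendsto_slope.mp hd
    have hsub1 : Set.Ioi x ⊆ {x}ᶜ := fun y hy => ne_of_gt hy
    have hsub2 : Set.Iio x ⊆ {x}ᶜ := fun y hy => ne_of_lt hy
    have hplus : Tendsto (fun h : ℝ => x + h) (nhdsWithin 0 (Set.Ioi 0))
        (nhdsWithin x {x}ᶜ) := by
      apply Tendsto.mono_right _ (nhdsWithin_mono x hsub1)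
      apply tendsto_nhdsWithin_of_tendsto_nhds_of_eventually_within
      · have h0 : Tendsto (fun h : ℝ => x + h) (nhds 0) (nhds (x + 0)) :=
          (continuous_const.add continuous_id).tendsto 0
        rw [add_zero] at h0
        exact h0.mono_left nhdsWithin_le_nhds
      · filter_upwards [self_mem_nhdsWithin] with h (hh : 0 < h)
        simpa [Set.mem_Ioi] using hh
    have hminus : Tendsto (fun h : ℝ => x - h) (nhdsWithin 0 (Set.Ioi 0))
        (nhdsWithin x {x}ᶜ) := by
      apply Tendsto.mono_right _ (nhdsWithin_mono x hsub2)
      apply tendsto_nhdsWithin_of_tendsto_nhds_of_eventually_within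
      · have h0 : Tendsto (fun h : ℝ => x - h) (nhds 0) (nhds (x - 0)) :=
          (continuous_const.sub continuous_id).tendsto 0
        rw [sub_zero] at h0
        exact h0.mono_left nhdsWithin_le_nhds
      · filter_upwards [self_mem_nhdsWithin] with h (hh : 0 < h)
        simpa [Set.mem_Iio] using hh
    have h1 := hs.comp hplus
    have h2 := hs.comp hminus
    have h3 := (h1.add h2).div_const 2
    rw [show (deriv (deriv f) x + deriv (deriv f) x) / 2 = deriv (deriv f) x by ring] at h3
    apply h3.congr'
    filter_upwards [self_mem_nhdsWithin] with h (hh : 0 < h)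
    simp only [Function.comp, slope_def_field]
    rw [show x + h - x = h by ring, show x - h - x = -h by ring]
    rw [div_neg, ← sub_eq_add_neg, ← sub_div, div_div]
    ring
  have key := HasDerivAt.lhopital_zero_nhdsGT (a := 0)
    (f := fun h : ℝ => f (x + h) + f (x - h) - 2 * f x)
    (f' := fun h : ℝ => deriv f (x + h) - deriv f (x - h))
    (g := fun h : ℝ => h ^ 2) (g' := fun h : ℝ => 2 * h)
    ?_ ?_ ?_ ?_ ?_ hdiv
  · exact key
  · filter_upwards with h
    have d1 : HasDerivAt (fun h : ℝ => f (x + h)) (deriv f (x + h)) h := by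
      simpa [Function.comp_def] using (hf1 (x + h)).hasDerivAt.comp h ((hasDerivAt_id h).const_add x)
    have d2 : HasDerivAt (fun h : ℝ => f (x - h)) (-deriv f (x - h)) h := by
      simpa [Function.comp_def] using (hf1 (x - h)).hasDerivAt.comp h ((hasDerivAt_id h).const_sub x)
    simpa [sub_eq_add_neg] using (d1.add d2).sub_const (2 * f x)
  · filter_upwards with h
    simpa using (hasDerivAt_pow 2 h)
  · filter_upwards [self_mem_nhdsWithin] with h (hh : 0 < h)
    positivity
  · have hc : Continuous (fun h : ℝ => f (x + h) + f (x - h) - 2 * f x) := by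
      have := hf.continuous
      continuity
    have h0 : Tendsto (fun h : ℝ => f (x + h) + f (x - h) - 2 * f x) (nhds 0)
        (nhds (f (x + 0) + f (x - 0) - 2 * f x)) := hc.tendsto 0
    simp only [add_zero, sub_zero] at h0
    rw [show f x + f x - 2 * f x = 0 by ring] at h0
    exact h0.mono_left nhdsWithin_le_nhds
  · have : Tendsto (fun h : ℝ => h ^ 2) (nhds 0) (nhds 0) := by
      simpa using (continuous_pow 2).tendsto (0:ℝ)
    exact this.mono_left nhdsWithin_le_nhds

theorem stmt_4 (f : ℝ → ℝ) (hf : ContDiff ℝ 2 f) (M : ℝ)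
    (hM : ∀ x, |deriv (deriv f) x| ≤ M) (x : ℝ) :
    Tendsto (fun t : ℝ => (((2/3) * f x + (1/6) * f (x + Real.sqrt (6 * t))
        + (1/6) * f (x - Real.sqrt (6 * t))) - f x) / t)
      (nhdsWithin 0 (Set.Ioi 0)) (nhds (deriv (deriv f) x)) := by
  have hcomp : Tendsto (fun t : ℝ => Real.sqrt (6 * t)) (nhdsWithin 0 (Set.Ioi 0))
      (nhdsWithin 0 (Set.Ioi 0)) := by
    apply tendsto_nhdsWithin_of_tendsto_nhds_of_eventually_within
    · have h0 : Tendsto (fun t : ℝ => Real.sqrt (6 * t)) (nhds 0) (nhds (Real.sqrt (6 * 0))) :=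
        (Real.continuous_sqrt.comp (continuous_const.mul continuous_id)).tendsto 0
      rw [show Real.sqrt (6 * 0) = 0 by simp] at h0
      exact h0.mono_left nhdsWithin_le_nhds
    · filter_upwards [self_mem_nhdsWithin] with t (ht : 0 < t)
      have : 0 < Real.sqrt (6 * t) := Real.sqrt_pos.mpr (by linarith)
      simpa [Set.mem_Ioi] using this
  have := (symm_quot f hf x).comp hcomp
  apply this.congr'
  filter_upwards [self_mem_nhdsWithin] with t (ht : 0 < t)
  have hsq : Real.sqrt (6 * t) ^ 2 = 6 * t :=
    Real.sq_sqrt (by linarith)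
  simp only [Function.comp, hsq]
  field_simp
  ring
end

section
/- Let g : [0,∞) → ℝ satisfy g(0) = 1, g differentiable at 0 with g'(0) = l, and |g(s)| ≤ e^{ω s} for some ω ∈ ℝ and all s ≥ 0. Then for every T > 0, sup_{t ∈ [0,T]} |e^{tl} − g(t/n)ⁿ| → 0 as n → ∞. -/
open Real Filter

lemma aux_abs_pow_sub_pow_le (x y M : ℝ) (n : ℕ) (hx : |x| ≤ M) (hy : |y| ≤ M) :
    |x ^ n - y ^ n| ≤ n * M ^ (n - 1) * |x - y| := by
  have hM : 0 ≤ M := le_trans (abs_nonneg x) hx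
  rw [← geom_sum₂_mul, abs_mul]
  have hsum : |∑ i ∈ Finset.range n, x ^ i * y ^ (n - 1 - i)| ≤ n * M ^ (n - 1) := by
    calc |∑ i ∈ Finset.range n, x ^ i * y ^ (n - 1 - i)|
        ≤ ∑ i ∈ Finset.range n, |x ^ i * y ^ (n - 1 - i)| := Finset.abs_sum_le_sum_abs _ _
      _ ≤ ∑ _i ∈ Finset.range n, M ^ (n - 1) := by
          apply Finset.sum_le_sum
          intro i hi
          rw [abs_mul, abs_pow, abs_pow]
          have h1 : |x| ^ i * |y| ^ (n - 1 - i) ≤ M ^ i * M ^ (n - 1 - i) :=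
            mul_le_mul (pow_le_pow_left₀ (abs_nonneg x) hx i)
              (pow_le_pow_left₀ (abs_nonneg y) hy _)
              (pow_nonneg (abs_nonneg y) _) (pow_nonneg hM i)
          refine h1.trans (le_of_eq ?_)
          rw [← pow_add]
          congr 1
          have : i < n := Finset.mem_range.mp hi
          omega
      _ = n * M ^ (n - 1) := by
          simp [Finset.sum_const, Finset.card_range, nsmul_eq_mul]
  exact mul_le_mul_of_nonneg_right hsum (abs_nonneg _)

theorem stmt_6 (g : ℝ → ℝ) (l ω : ℝ) (hg0 : g 0 = 1)
    (hg : HasDerivWithinAt g l (Set.Ici 0) 0)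
    (hN : ∀ s : ℝ, 0 ≤ s → |g s| ≤ Real.exp (ω * s)) :
    ∀ T : ℝ, 0 < T →
      Tendsto (fun n : ℕ => ⨆ t : Set.Icc (0:ℝ) T, |Real.exp (t * l) - (g (t / n)) ^ n|)
        atTop (nhds 0) := by
  intro T hT
  set K : ℝ := |ω| + |l| with hKdef
  have hK0 : 0 ≤ K := add_nonneg (abs_nonneg _) (abs_nonneg _)
  set h : ℝ → ℝ := fun s => g s - Real.exp (s * l) with hhdef
  have hh0 : h 0 = 0 := by simp [hhdef, hg0]
  have hd : HasDerivWithinAt h 0 (Set.Ici 0) 0 := by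
    have he : HasDerivAt (fun s : ℝ => Real.exp (s * l)) l 0 := by
      have := (hasDerivAt_mul_const (x := (0 : ℝ)) l).exp
      simpa using this
    have h2 := hg.sub he.hasDerivWithinAt
    rw [sub_self] at h2
    exact h2
  have hslope : Tendsto (fun s => h s / s) (nhdsWithin 0 (Set.Ioi 0)) (nhds 0) := by
    have := hasDerivWithinAt_iff_tendsto_slope.mp hd
    have hset : Set.Ici (0:ℝ) \ {0} = Set.Ioi 0 := by
      ext s; simp [Set.mem_diff, lt_iff_le_and_ne, eq_comm]
    rw [hset] at this
    refine this.congr fun s => ?_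
    simp [slope_def_field, hh0]
  rw [Metric.tendsto_atTop]
  intro ε hε
  set ε' : ℝ := ε / (2 * Real.exp (K * T) * T) with hε'def
  have hexpT : 0 < Real.exp (K * T) := Real.exp_pos _
  have hε' : 0 < ε' := by positivity
  obtain ⟨δ, hδ, hδε⟩ := Metric.tendsto_nhdsWithin_nhds.mp hslope ε' hε'
  obtain ⟨N₀, hN₀⟩ := exists_nat_gt (T / δ)
  refine ⟨max N₀ 1, fun n hn => ?_⟩
  have hn1 : 1 ≤ n := le_trans (le_max_right _ _) hn
  have hnpos : (0 : ℝ) < n := by exact_mod_cast hn1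
  have hnN₀ : (N₀ : ℝ) ≤ n := by exact_mod_cast le_trans (le_max_left _ _) hn
  have hTn : T / n < δ := (div_lt_iff₀ hnpos).mpr
    (by rw [mul_comm]; exact (div_lt_iff₀ hδ).mp (lt_of_lt_of_le hN₀ hnN₀))
  -- key pointwise bound
  have key : ∀ t : Set.Icc (0:ℝ) T, |Real.exp (t * l) - (g (t / n)) ^ n| ≤ ε / 2 := by
    rintro ⟨t, ht0, htT⟩
    simp only
    set s : ℝ := t / n with hsdef
    have hs0 : 0 ≤ s := div_nonneg ht0 hnpos.le
    have hst : (n : ℝ) * s = t := by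
      rw [hsdef]; field_simp
    have hsT : s ≤ T / n := by rw [hsdef]; gcongr
    have hsδ : s < δ := lt_of_le_of_lt hsT hTn
    -- |h s| ≤ ε' * s
    have hhs : |h s| ≤ ε' * s := by
      rcases eq_or_lt_of_le hs0 with hseq | hslt
      · simp [← hseq, hh0]
      · have := hδε (Set.mem_Ioi.mpr hslt) (by simpa [Real.dist_eq, abs_of_nonneg hs0] using hsδ)
        rw [Real.dist_eq, sub_zero, abs_div, abs_of_pos hslt] at this
        calc |h s| = |h s| / s * s := by field_simp
          _ ≤ ε' * s := mul_le_mul_of_nonneg_right this.le hs0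
    -- bounds for the pow difference
    have hgs : |g s| ≤ Real.exp (K * s) := by
      refine (hN s hs0).trans (Real.exp_le_exp.mpr ?_)
      have : ω ≤ K := le_trans (le_abs_self ω) (le_add_of_nonneg_right (abs_nonneg l))
      exact mul_le_mul_of_nonneg_right this hs0
    have hes : |Real.exp (s * l)| ≤ Real.exp (K * s) := by
      rw [abs_of_pos (Real.exp_pos _)]
      apply Real.exp_le_exp.mpr
      calc s * l ≤ s * |l| := mul_le_mul_of_nonneg_left (le_abs_self l) hs0
        _ ≤ s * K := mul_le_mul_of_nonneg_left
            (le_add_of_nonneg_left (abs_nonneg ω)) hs0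
        _ = K * s := mul_comm _ _
    have hpow := aux_abs_pow_sub_pow_le (g s) (Real.exp (s * l)) (Real.exp (K * s)) n hgs hes
    have hMpow : Real.exp (K * s) ^ (n - 1) ≤ Real.exp (K * T) := by
      rw [← Real.exp_nat_mul]
      apply Real.exp_le_exp.mpr
      calc (↑(n - 1) : ℝ) * (K * s) ≤ (n : ℝ) * (K * s) := by
            apply mul_le_mul_of_nonneg_right _ (by positivity)
            exact_mod_cast Nat.sub_le n 1
        _ = K * ((n : ℝ) * s) := by ring
        _ = K * t := by rw [hst]
        _ ≤ K * T := mul_le_mul_of_nonneg_left htT hK0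
    have hen : Real.exp (s * l) ^ n = Real.exp (t * l) := by
      rw [← Real.exp_nat_mul]
      congr 1
      calc (n : ℝ) * (s * l) = (n : ℝ) * s * l := by ring
        _ = t * l := by rw [hst]
    calc |Real.exp (t * l) - g s ^ n| = |g s ^ n - Real.exp (s * l) ^ n| := by
          rw [hen, abs_sub_comm]
      _ ≤ n * Real.exp (K * s) ^ (n - 1) * |g s - Real.exp (s * l)| := hpow
      _ = n * Real.exp (K * s) ^ (n - 1) * |h s| := rfl
      _ ≤ n * Real.exp (K * T) * (ε' * s) := by
          apply mul_le_mul _ hhs (abs_nonneg _) (by positivity)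
          exact mul_le_mul_of_nonneg_left hMpow hnpos.le
      _ = Real.exp (K * T) * ε' * ((n : ℝ) * s) := by ring
      _ = Real.exp (K * T) * ε' * t := by rw [hst]
      _ ≤ Real.exp (K * T) * ε' * T := by
          apply mul_le_mul_of_nonneg_left htT (by positivity)
      _ = ε / 2 := by
          rw [hε'def]; field_simp
  have hsupnn : 0 ≤ ⨆ t : Set.Icc (0:ℝ) T, |Real.exp (t * l) - (g (t / n)) ^ n| :=
    Real.iSup_nonneg fun t => abs_nonneg _
  have hsuple : (⨆ t : Set.Icc (0:ℝ) T, |Real.exp (t * l) - (g (t / n)) ^ n|) ≤ ε / 2 :=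
    Real.iSup_le key (by positivity)
  rw [Real.dist_eq, sub_zero, abs_of_nonneg hsupnn]
  exact lt_of_le_of_lt hsuple (by linarith)
end
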